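/- For R ∈ (0, 1) and v > 0, the equation (κ/R)·Φ(−(1/v)·log κ − v/2) = Φ(−(1/v)·log κ + v/2) has a unique solution κ ∈ (0, ∞), where Φ is the standard normal CDF. -/

import Mathlib

open Real MeasureTheory Set Filter Topology

noncomputable def stdNormalCDF (x : ℝ) : ℝ :=
  ∫ z in Set.Iio x, Real.exp (-z ^ 2 / 2) / Real.sqrt (2 * Real.pi)

noncomputable def nphi (x : ℝ) : ℝ := Real.exp (-x ^ 2 / 2) / Real.sqrt (2 * Real.pi)

lemma nphi_pos (x : ℝ) : 0 < nphi x := by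
  unfold nphi; positivity

lemma nphi_even (x : ℝ) : nphi (-x) = nphi x := by simp [nphi]

lemma continuous_nphi : Continuous nphi := by
  unfold nphi; fun_prop

lemma integrable_nphi : Integrable nphi := by
  have h := (integrable_exp_neg_mul_sq (by norm_num : (0:ℝ) < 1/2)).div_const (Real.sqrt (2*Real.pi))
  refine h.congr (Eventually.of_forall fun x => ?_)
  simp only [nphi]; ring_nf

lemma integrable_mul_nphi : Integrable (fun x => x * nphi x) := by
  have h := (integrable_mul_exp_neg_mul_sq (by norm_num : (0:ℝ) < 1/2)).div_const (Real.sqrt (2*Real.pi))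
  refine h.congr (Eventually.of_forall fun x => ?_)
  simp only [nphi]; ring_nf

lemma hasDerivAt_nphi (x : ℝ) : HasDerivAt nphi (-x * nphi x) x := by
  have h1 : HasDerivAt (fun y : ℝ => -y ^ 2 / 2) (-x) x := by
    have := ((hasDerivAt_pow 2 x).neg).div_const 2
    simpa using this.congr_deriv (by ring)
  have h2 := (h1.exp).div_const (Real.sqrt (2*Real.pi))
  refine h2.congr_deriv ?_
  simp only [nphi]; ring

lemma Phi_eq (x : ℝ) : stdNormalCDF x = ∫ z in Iic x, nphi z := by
  rw [stdNormalCDF, ← integral_Iic_eq_integral_Iio]; rfl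

lemma Phi_sub (a b : ℝ) : stdNormalCDF b - stdNormalCDF a = ∫ z in a..b, nphi z := by
  rw [Phi_eq, Phi_eq]
  exact intervalIntegral.integral_Iic_sub_Iic integrable_nphi.integrableOn integrable_nphi.integrableOn


lemma hasDerivAt_Phi (x : ℝ) : HasDerivAt stdNormalCDF (nphi x) x := by
  have h : HasDerivAt (fun u => ∫ t in (0:ℝ)..u, nphi t) (nphi x) x :=
    intervalIntegral.integral_hasDerivAt_right (integrable_nphi.intervalIntegrable)
      (continuous_nphi.stronglyMeasurable.stronglyMeasurableAtFilter)
      continuous_nphi.continuousAt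
  have he : stdNormalCDF = fun u => stdNormalCDF 0 + ∫ t in (0:ℝ)..u, nphi t := by
    funext u; rw [← Phi_sub]; ring
  rw [he]
  exact h.const_add _

lemma continuous_Phi : Continuous stdNormalCDF :=
  continuous_iff_continuousAt.2 fun x => (hasDerivAt_Phi x).continuousAt

lemma Phi_pos (x : ℝ) : 0 < stdNormalCDF x := by
  rw [Phi_eq]
  rw [setIntegral_pos_iff_support_of_nonneg_ae
    (Eventually.of_forall fun z => (nphi_pos z).le) integrable_nphi.integrableOn]
  have : Function.support nphi = univ := by
    ext z; simp [Function.mem_support, (nphi_pos z).ne']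
  rw [this, univ_inter]
  simp [Real.volume_Iic]

lemma integral_nphi : ∫ x, nphi x = 1 := by
  have h : ∫ x : ℝ, Real.exp (-(1/2) * x ^ 2) = Real.sqrt (Real.pi / (1/2)) :=
    integral_gaussian (1/2)
  have : ∫ x, nphi x = (∫ x : ℝ, Real.exp (-(1/2) * x ^ 2)) / Real.sqrt (2 * Real.pi) := by
    rw [← integral_div]
    congr 1; funext x; simp only [nphi]; ring_nf
  rw [this, h]
  rw [show Real.pi / (1/2) = 2 * Real.pi by ring]
  rw [div_self (by positivity)]

lemma Phi_le_one (x : ℝ) : stdNormalCDF x ≤ 1 := by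
  rw [Phi_eq, ← integral_nphi]
  exact setIntegral_le_integral integrable_nphi (Eventually.of_forall fun z => (nphi_pos z).le)

lemma Phi_mono : Monotone stdNormalCDF := by
  intro a b hab
  have := Phi_sub a b
  have h2 : 0 ≤ ∫ z in a..b, nphi z :=
    intervalIntegral.integral_nonneg hab fun z _ => (nphi_pos z).le
  linarith

lemma tendsto_nphi_atTop : Tendsto nphi atTop (𝓝 0) := by
  have h1 : Tendsto (fun x : ℝ => -x ^ 2 / 2) atTop atBot := by
    apply Tendsto.atBot_div_const (by norm_num)
    exact tendsto_neg_atBot_iff.mpr (tendsto_pow_atTop (by norm_num))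
  have h2 := (Real.tendsto_exp_atBot.comp h1).div_const (Real.sqrt (2 * Real.pi))
  rw [zero_div] at h2
  exact h2.congr fun x => by simp [nphi, Function.comp]

lemma tendsto_nphi_atBot : Tendsto nphi atBot (𝓝 0) := by
  have := tendsto_nphi_atTop.comp tendsto_neg_atBot_atTop
  refine this.congr fun x => ?_
  simp [Function.comp, nphi_even]


lemma integral_neg_mul_nphi (a : ℝ) : ∫ z in Iic a, (-z) * nphi z = nphi a := by
  have h : ∀ x ∈ Iic a, HasDerivAt nphi (-x * nphi x) x := fun x _ => hasDerivAt_nphi x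
  have hint : IntegrableOn (fun x : ℝ => -x * nphi x) (Iic a) := by
    have := integrable_mul_nphi.neg
    refine (this.congr (Eventually.of_forall fun x => by simp)).integrableOn
  have := MeasureTheory.integral_Iic_of_hasDerivAt_of_tendsto' h hint tendsto_nphi_atBot
  simpa using this

lemma mills_upper {x : ℝ} (hx : 0 < x) : stdNormalCDF (-x) ≤ nphi x / x := by
  rw [Phi_eq]
  have h1 : ∫ z in Iic (-x), nphi z ≤ ∫ z in Iic (-x), (1/x) * ((-z) * nphi z) := by
    refine setIntegral_mono_on integrable_nphi.integrableOn ?_ measurableSet_Iic ?_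
    · exact (((integrable_mul_nphi.neg.congr (Eventually.of_forall fun z => by ring :
        (fun z => -(z * nphi z)) =ᵐ[volume] fun z => -z * nphi z)).const_mul (1/x))).integrableOn
    · intro z hz
      have hz' : z ≤ -x := hz
      have : (1:ℝ) ≤ (1/x) * (-z) := by
        rw [one_div, ← div_eq_inv_mul, le_div_iff₀ hx]
        linarith
      calc nphi z = 1 * nphi z := by ring
        _ ≤ ((1/x) * (-z)) * nphi z := by
            exact mul_le_mul_of_nonneg_right this (nphi_pos z).le
        _ = (1/x) * ((-z) * nphi z) := by ring
  rw [MeasureTheory.integral_const_mul, integral_neg_mul_nphi, nphi_even] at h1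
  calc ∫ z in Iic (-x), nphi z ≤ 1/x * nphi x := h1
    _ = nphi x / x := by ring

lemma Phi_tendsto_atBot : Tendsto stdNormalCDF atBot (𝓝 0) := by
  have hub : ∀ᶠ x in atBot, stdNormalCDF x ≤ nphi x := by
    filter_upwards [eventually_le_atBot (-1 : ℝ)] with x hx
    have hx1 : (0:ℝ) < -x := by linarith
    have := mills_upper hx1
    rw [neg_neg] at this
    calc stdNormalCDF x ≤ nphi (-x) / (-x) := this
      _ ≤ nphi (-x) := by
          rw [div_le_iff₀ hx1]
          nlinarith [nphi_pos (-x)]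
      _ = nphi x := by rw [← nphi_even x]
  have hlb : ∀ᶠ x in atBot, (0:ℝ) ≤ stdNormalCDF x :=
    Eventually.of_forall fun x => (Phi_pos x).le
  exact tendsto_of_tendsto_of_tendsto_of_le_of_le' tendsto_const_nhds tendsto_nphi_atBot hlb hub


lemma hasDerivAt_millsg (t : ℝ) :
    HasDerivAt (fun t => stdNormalCDF (-t) - t * nphi t / (1 + t^2))
      (-(2 * nphi t / (1 + t^2)^2)) t := by
  have h1 : HasDerivAt (fun t : ℝ => stdNormalCDF (-t)) (-nphi t) t := by
    have := (hasDerivAt_Phi (-t)).comp t (hasDerivAt_neg t)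
    simpa [nphi_even, Function.comp_def] using this
  have hN : HasDerivAt (fun t : ℝ => t * nphi t) ((1 - t^2) * nphi t) t := by
    have := (hasDerivAt_id t).mul (hasDerivAt_nphi t)
    exact this.congr_deriv (by simp [id]; ring)
  have hD : HasDerivAt (fun t : ℝ => 1 + t^2) (2*t) t := by
    have := (hasDerivAt_pow 2 t).const_add 1
    exact this.congr_deriv (by ring)
  have hden : (1 + t^2) ≠ 0 := by positivity
  have h2 := hN.div hD hden
  have h := h1.sub h2
  refine h.congr_deriv ?_
  field_simp
  ring

lemma mills_lower {x : ℝ} (hx : 0 ≤ x) : x * nphi x / (1 + x^2) < stdNormalCDF (-x) := by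
  set g : ℝ → ℝ := fun t => stdNormalCDF (-t) - t * nphi t / (1 + t^2) with hg
  have hanti : StrictAnti g := by
    refine strictAnti_of_deriv_neg fun t => ?_
    rw [(hasDerivAt_millsg t).deriv]
    have h1 := nphi_pos t
    have h2 : (0:ℝ) < (1 + t^2)^2 := by positivity
    have : 0 < 2 * nphi t / (1 + t^2)^2 := by positivity
    linarith
  have hg0 : Tendsto g atTop (𝓝 0) := by
    have h1 : Tendsto (fun t : ℝ => stdNormalCDF (-t)) atTop (𝓝 0) :=
      Phi_tendsto_atBot.comp tendsto_neg_atTop_atBot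
    have h2 : Tendsto (fun t : ℝ => t * nphi t / (1 + t^2)) atTop (𝓝 0) := by
      have hub : ∀ᶠ t in atTop, t * nphi t / (1 + t^2) ≤ nphi t := by
        filter_upwards [eventually_ge_atTop (0:ℝ)] with t ht
        rw [div_le_iff₀ (by positivity)]
        nlinarith [nphi_pos t, sq_nonneg (2*t-1), mul_nonneg (nphi_pos t).le (sq_nonneg (2*t-1))]
      have hlb : ∀ᶠ t in atTop, (0:ℝ) ≤ t * nphi t / (1 + t^2) := by
        filter_upwards [eventually_ge_atTop (0:ℝ)] with t ht
        have := (nphi_pos t).le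
        positivity
      exact tendsto_of_tendsto_of_tendsto_of_le_of_le' tendsto_const_nhds tendsto_nphi_atTop hlb hub
    simpa using h1.sub h2
  have h1 : g (x+1) ≤ g x := hanti.antitone (by linarith)
  have h2 : 0 ≤ g (x+1) := by
    refine le_of_tendsto hg0 ?_
    filter_upwards [eventually_ge_atTop (x+1)] with t ht
    exact hanti.antitone ht
  have h3 : g (x+1) < g x := hanti (by linarith)
  have : 0 < g x := lt_of_le_of_lt h2 h3
  rw [hg] at this
  simp only at this
  linarith


noncomputable def Wfun (x : ℝ) : ℝ :=
  (stdNormalCDF x)^2 - x * nphi x * stdNormalCDF x - (nphi x)^2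

lemma hasDerivAt_W (x : ℝ) :
    HasDerivAt Wfun (nphi x * ((1 + x^2) * stdNormalCDF x + x * nphi x)) x := by
  have hΦ := hasDerivAt_Phi x
  have hφ := hasDerivAt_nphi x
  have h1 : HasDerivAt (fun y => (stdNormalCDF y)^2) (2 * stdNormalCDF x * nphi x) x := by
    have := hΦ.pow 2
    exact this.congr_deriv (by ring)
  have h2 : HasDerivAt (fun y => y * nphi y * stdNormalCDF y)
      (((1 - x^2) * nphi x) * stdNormalCDF x + (x * nphi x) * nphi x) x := by
    have hN : HasDerivAt (fun y : ℝ => y * nphi y) ((1 - x^2) * nphi x) x := by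
      have := (hasDerivAt_id x).mul hφ
      exact this.congr_deriv (by simp [id]; ring)
    exact hN.mul hΦ
  have h3 : HasDerivAt (fun y => (nphi y)^2) (2 * nphi x * (-x * nphi x)) x := by
    have := hφ.pow 2
    exact this.congr_deriv (by ring)
  have := (h1.sub h2).sub h3
  exact this.congr_deriv (by ring)

lemma bracket_pos (x : ℝ) : 0 < (1 + x^2) * stdNormalCDF x + x * nphi x := by
  rcases le_or_gt 0 x with hx | hx
  · have := Phi_pos x
    have := nphi_pos x
    nlinarith [mul_nonneg hx (nphi_pos x).le]
  · have h := mills_lower (x := -x) (by linarith)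
    rw [neg_neg, nphi_even] at h
    rw [div_lt_iff₀ (by positivity)] at h
    nlinarith
  
lemma W_tendsto_atBot : Tendsto Wfun atBot (𝓝 0) := by
  have h1 : Tendsto (fun x => (stdNormalCDF x)^2) atBot (𝓝 0) := by
    have := Phi_tendsto_atBot.mul Phi_tendsto_atBot
    rw [mul_zero] at this
    exact this.congr fun x => (sq (stdNormalCDF x)).symm
  have htop : Tendsto (fun t : ℝ => t * nphi t) atTop (𝓝 0) := by
    have hb : Tendsto (fun t : ℝ => (t * Real.exp (-t)) / Real.sqrt (2 * Real.pi))
        atTop (𝓝 0) := by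
      have := (Real.tendsto_pow_mul_exp_neg_atTop_nhds_zero 1).div_const (Real.sqrt (2 * Real.pi))
      rw [zero_div] at this
      exact this.congr fun t => by rw [pow_one]
    have hub : ∀ᶠ t : ℝ in atTop, t * nphi t ≤ (t * Real.exp (-t)) / Real.sqrt (2 * Real.pi) := by
      filter_upwards [eventually_ge_atTop (2:ℝ)] with t ht
      have hexp : Real.exp (-t^2/2) ≤ Real.exp (-t) := by
        apply Real.exp_le_exp.2
        nlinarith
      have hc : (0:ℝ) < Real.sqrt (2 * Real.pi) := by positivity
      rw [nphi, mul_div_assoc']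
      gcongr

    have hlb : ∀ᶠ t : ℝ in atTop, (0:ℝ) ≤ t * nphi t := by
      filter_upwards [eventually_ge_atTop (0:ℝ)] with t ht
      exact mul_nonneg ht (nphi_pos t).le
    exact tendsto_of_tendsto_of_tendsto_of_le_of_le' tendsto_const_nhds hb hlb hub
  have hxφ : Tendsto (fun x : ℝ => x * nphi x) atBot (𝓝 0) := by
    have := (htop.comp tendsto_neg_atBot_atTop).neg
    rw [neg_zero] at this
    exact this.congr fun x => by simp [Function.comp, nphi_even]
  have h2 : Tendsto (fun x => x * nphi x * stdNormalCDF x) atBot (𝓝 0) := by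
    simpa using hxφ.mul Phi_tendsto_atBot
  have h3 : Tendsto (fun x => (nphi x)^2) atBot (𝓝 0) := by
    have := tendsto_nphi_atBot.mul tendsto_nphi_atBot
    rw [mul_zero] at this
    exact this.congr fun x => (sq (nphi x)).symm
  have := (h1.sub h2).sub h3
  rw [show Wfun = fun x => (stdNormalCDF x)^2 - x * nphi x * stdNormalCDF x - (nphi x)^2 from rfl]
  simpa using this


lemma W_pos (x : ℝ) : 0 < Wfun x := by
  have hmono : StrictMono Wfun := by
    refine strictMono_of_deriv_pos fun t => ?_
    rw [(hasDerivAt_W t).deriv]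
    exact mul_pos (nphi_pos t) (bracket_pos t)
  have h2 : 0 ≤ Wfun (x - 1) := by
    refine le_of_tendsto W_tendsto_atBot ?_
    filter_upwards [eventually_le_atBot (x - 1)] with t ht
    exact hmono.monotone ht
  exact lt_of_le_of_lt h2 (hmono (by linarith))

noncomputable def psi (x : ℝ) : ℝ := x + nphi x / stdNormalCDF x

lemma hasDerivAt_psi (x : ℝ) :
    HasDerivAt psi (Wfun x / (stdNormalCDF x)^2) x := by
  have h := ((hasDerivAt_nphi x).div (hasDerivAt_Phi x) (Phi_pos x).ne')
  have := (hasDerivAt_id x).add h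
  refine this.congr_deriv ?_
  rw [Wfun, eq_div_iff (pow_ne_zero 2 (Phi_pos x).ne')]
  field_simp [(Phi_pos x).ne']
  ring

lemma psi_strictMono : StrictMono psi := by
  refine strictMono_of_deriv_pos fun t => ?_
  rw [(hasDerivAt_psi t).deriv]
  exact div_pos (W_pos t) (by have := Phi_pos t; positivity)


section Ftilde
variable {v : ℝ} (hv : 0 < v)

noncomputable def Ft (v : ℝ) (x : ℝ) : ℝ :=
  Real.exp (v*x) * stdNormalCDF (x + v/2) / stdNormalCDF (x - v/2)

lemma hasDerivAt_Ft (x : ℝ) :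
    HasDerivAt (Ft v)
      (((v * Real.exp (v*x) * stdNormalCDF (x + v/2) + Real.exp (v*x) * nphi (x + v/2)) *
          stdNormalCDF (x - v/2) -
        Real.exp (v*x) * stdNormalCDF (x + v/2) * nphi (x - v/2)) /
        (stdNormalCDF (x - v/2))^2) x := by
  have he : HasDerivAt (fun x : ℝ => Real.exp (v*x)) (v * Real.exp (v*x)) x := by
    have := ((hasDerivAt_id x).const_mul v).exp
    exact this.congr_deriv (by simp [id]; ring)
  have hb : HasDerivAt (fun x : ℝ => stdNormalCDF (x + v/2)) (nphi (x + v/2)) x := by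
    have := (hasDerivAt_Phi (x + v/2)).comp x ((hasDerivAt_id x).add_const (v/2))
    simpa [Function.comp_def] using this
  have ha : HasDerivAt (fun x : ℝ => stdNormalCDF (x - v/2)) (nphi (x - v/2)) x := by
    have := (hasDerivAt_Phi (x - v/2)).comp x ((hasDerivAt_id x).sub_const (v/2))
    simpa [Function.comp_def] using this
  exact (he.mul hb).div ha (Phi_pos _).ne'

include hv in
lemma Ft_strictMono : StrictMono (Ft v) := by
  refine strictMono_of_deriv_pos fun x => ?_
  rw [(hasDerivAt_Ft x).deriv]
  set a := x - v/2
  set b := x + v/2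
  have hab : a < b := by simp only [a, b]; linarith
  have hA := Phi_pos a
  have hB := Phi_pos b
  have hna := nphi_pos a
  have hnb := nphi_pos b
  have hpsi := psi_strictMono hab
  simp only [psi] at hpsi
  have hkey : nphi a * stdNormalCDF b - nphi b * stdNormalCDF a
      < v * (stdNormalCDF a * stdNormalCDF b) := by
    have h1 : nphi a / stdNormalCDF a - nphi b / stdNormalCDF b < v := by
      simp only [a, b] at hpsi ⊢; linarith
    have h2 : nphi a / stdNormalCDF a - nphi b / stdNormalCDF b
        = (nphi a * stdNormalCDF b - nphi b * stdNormalCDF a) /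
          (stdNormalCDF a * stdNormalCDF b) := by
      field_simp
    rw [h2, div_lt_iff₀ (by positivity)] at h1
    linarith
  have hexp := Real.exp_pos (v*x)
  apply div_pos ?_ (by positivity)
  have : (v * Real.exp (v*x) * stdNormalCDF b + Real.exp (v*x) * nphi b) * stdNormalCDF a -
      Real.exp (v*x) * stdNormalCDF b * nphi a
      = Real.exp (v*x) * (v * (stdNormalCDF a * stdNormalCDF b) -
          (nphi a * stdNormalCDF b - nphi b * stdNormalCDF a)) := by ring
  rw [this]
  apply mul_pos hexp
  linarith

lemma Ft_continuous : Continuous (Ft v) :=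
  continuous_iff_continuousAt.2 fun x => (hasDerivAt_Ft x).continuousAt

end Ftilde


lemma exp_mul_nphi (v t : ℝ) : Real.exp (v*(v/2 - t)) * nphi (t - v) = nphi t := by
  rw [nphi, nphi, ← mul_div_assoc, ← Real.exp_add]
  congr 1
  ring

lemma Ft_aux {t v : ℝ} (htv : t - v ≠ 0) (ht : t ≠ 0) :
    Real.exp (v*(v/2 - t)) * (nphi (t-v) / (t-v)) / (t * nphi t / (1 + t^2))
      = (1 + t^2) / ((t-v) * t) := by
  rw [← exp_mul_nphi v t]
  have h1 := (nphi_pos (t-v)).ne'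
  have h2 := (Real.exp_pos (v*(v/2 - t))).ne'
  have h3 : (1:ℝ) + t^2 ≠ 0 := by positivity
  field_simp

lemma Ft_small {R v : ℝ} (hR : R ∈ Set.Ioo (0 : ℝ) 1) (hv : 0 < v) :
    ∃ x₁, Ft v x₁ < 1/R := by
  obtain ⟨hR0, hR1⟩ := hR
  set t : ℝ := max (max ((v+1)/(1-R)) (R+1)) (v+1) with ht
  have ht1 : (v+1)/(1-R) ≤ t := le_trans (le_max_left _ _) (le_max_left _ _)
  have ht2 : R+1 ≤ t := le_trans (le_max_right _ _) (le_max_left _ _)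
  have ht3 : v+1 ≤ t := le_max_right _ _
  have htv : 0 < t - v := by linarith
  have ht0 : 0 < t := by linarith
  have h1R : (0:ℝ) < 1 - R := by linarith
  have hkey : (1-R)*t ≥ v+1 := by
    rw [ge_iff_le, ← div_le_iff₀' h1R]
    exact ht1
  refine ⟨v/2 - t, ?_⟩
  have hb : (v/2 - t) + v/2 = -(t-v) := by ring
  have ha : (v/2 - t) - v/2 = -t := by ring
  have he0 : 0 < Real.exp (v*(v/2 - t)) := Real.exp_pos _
  have hΦa := Phi_pos (-t)
  have hml := mills_lower ht0.le
  have hmu := mills_upper htv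
  have hd0 : 0 < t * nphi t / (1 + t^2) := by
    have := nphi_pos t; positivity
  have step1 : Ft v (v/2 - t) ≤ Real.exp (v*(v/2 - t)) * (nphi (t-v) / (t-v)) / stdNormalCDF (-t) := by
    rw [Ft, hb, ha]
    gcongr
  have step2 : Real.exp (v*(v/2 - t)) * (nphi (t-v) / (t-v)) / stdNormalCDF (-t)
      < Real.exp (v*(v/2 - t)) * (nphi (t-v) / (t-v)) / (t * nphi t / (1 + t^2)) := by
    apply div_lt_div_of_pos_left ?_ hd0 hml
    have := nphi_pos (t-v); positivity
  have step3 : Real.exp (v*(v/2 - t)) * (nphi (t-v) / (t-v)) / (t * nphi t / (1 + t^2))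
      = (1 + t^2) / ((t-v) * t) := Ft_aux (by linarith) ht0.ne'
  have step4 : (1 + t^2) / ((t-v) * t) ≤ 1/R := by
    rw [div_le_div_iff₀ (by positivity) hR0]
    nlinarith
  calc Ft v (v/2 - t) ≤ Real.exp (v*(v/2 - t)) * (nphi (t-v) / (t-v)) / stdNormalCDF (-t) := step1
    _ < Real.exp (v*(v/2 - t)) * (nphi (t-v) / (t-v)) / (t * nphi t / (1 + t^2)) := step2
    _ = (1 + t^2) / ((t-v) * t) := step3
    _ ≤ 1/R := step4

lemma Ft_big {R v : ℝ} (hR : R ∈ Set.Ioo (0 : ℝ) 1) (hv : 0 < v) :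
    ∃ x₂, 1/R < Ft v x₂ := by
  obtain ⟨hR0, hR1⟩ := hR
  set Φv : ℝ := stdNormalCDF (v/2) with hΦv
  have hΦv0 : 0 < Φv := Phi_pos _
  set x₂ : ℝ := max 0 ((Real.log (1/(R * Φv)) + 1)/v) with hx₂
  have hx₂0 : 0 ≤ x₂ := le_max_left _ _
  have hvx : Real.log (1/(R * Φv)) + 1 ≤ v * x₂ := by
    rw [← div_le_iff₀' hv]
    exact le_max_right _ _
  have hexp : 1/(R * Φv) < Real.exp (v * x₂) := by
    calc 1/(R * Φv) = Real.exp (Real.log (1/(R * Φv))) :=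
          (Real.exp_log (by positivity)).symm
      _ < Real.exp (v * x₂) := Real.exp_lt_exp.2 (by linarith)
  refine ⟨x₂, ?_⟩
  have h1 : 1/R < Real.exp (v * x₂) * Φv := by
    rw [div_lt_iff₀ hR0]
    calc 1 = (1/(R * Φv)) * (R * Φv) := by field_simp
      _ < Real.exp (v * x₂) * (R * Φv) := by
          apply mul_lt_mul_of_pos_right hexp (by positivity)
      _ = Real.exp (v * x₂) * Φv * R := by ring
  have h2 : Real.exp (v * x₂) * Φv ≤ Real.exp (v * x₂) * stdNormalCDF (x₂ + v/2) := by
    apply mul_le_mul_of_nonneg_left (Phi_mono (by linarith)) (Real.exp_pos _).le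
  have h3 : Real.exp (v * x₂) * stdNormalCDF (x₂ + v/2) ≤ Ft v x₂ := by
    rw [Ft, le_div_iff₀ (Phi_pos _)]
    have hN : 0 ≤ Real.exp (v * x₂) * stdNormalCDF (x₂ + v/2) :=
      mul_nonneg (Real.exp_pos _).le (Phi_pos _).le
    exact mul_le_of_le_one_right hN (Phi_le_one _)
  linarith


/-- for R ∈ (0,1) and v > 0, the equation
(κ/R)·Φ(−(1/v)·log κ − v/2) = Φ(−(1/v)·log κ + v/2) has a unique solution
κ ∈ (0, ∞). -/
theorem kappa_unique (R v : ℝ) (hR : R ∈ Set.Ioo (0 : ℝ) 1) (hv : 0 < v) :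
    ∃! κ : ℝ, 0 < κ ∧
      (κ / R) * stdNormalCDF (-(1 / v) * Real.log κ - v / 2) =
        stdNormalCDF (-(1 / v) * Real.log κ + v / 2) := by
  obtain ⟨hR0, hR1⟩ := hR
  obtain ⟨x₁, hx₁⟩ := Ft_small ⟨hR0, hR1⟩ hv
  obtain ⟨x₂, hx₂⟩ := Ft_big ⟨hR0, hR1⟩ hv
  have hx12 : x₁ ≤ x₂ := by
    by_contra h
    push_neg at h
    have := (Ft_strictMono hv) h
    linarith
  have hIcc : (1/R : ℝ) ∈ Icc (Ft v x₁) (Ft v x₂) := ⟨hx₁.le, hx₂.le⟩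
  obtain ⟨x₀, _, hx₀⟩ := intermediate_value_Icc hx12 (Ft_continuous).continuousOn hIcc
  -- the solution
  refine ⟨Real.exp (-(v * x₀)), ⟨Real.exp_pos _, ?_⟩, ?_⟩
  · have hlog : -(1/v) * Real.log (Real.exp (-(v * x₀))) = x₀ := by
      rw [Real.log_exp]
      field_simp
    rw [hlog]
    have h0 : Ft v x₀ = 1/R := hx₀
    rw [Ft, div_eq_iff (Phi_pos (x₀ - v/2)).ne'] at h0
    have hE := Real.exp_pos (v * x₀)
    rw [Real.exp_neg]
    have h0' : stdNormalCDF (x₀ - v/2)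
        = R * (Real.exp (v*x₀) * stdNormalCDF (x₀ + v/2)) := by
      rw [h0, one_div, mul_inv_cancel_left₀ hR0.ne']
    rw [h0']
    calc (Real.exp (v*x₀))⁻¹ / R * (R * (Real.exp (v*x₀) * stdNormalCDF (x₀ + v/2)))
        = ((Real.exp (v*x₀))⁻¹ * Real.exp (v*x₀)) * (R / R) * stdNormalCDF (x₀ + v/2) := by
          ring
      _ = stdNormalCDF (x₀ + v/2) := by
          rw [inv_mul_cancel₀ hE.ne', div_self hR0.ne', one_mul, one_mul]
  · rintro κ' ⟨hκ'0, hκ'⟩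
    set x' : ℝ := -(1/v) * Real.log κ' with hx'
    have hκ'e : κ' = Real.exp (-(v * x')) := by
      rw [hx']
      rw [show -(v * (-(1/v) * Real.log κ')) = Real.log κ' by field_simp]
      rw [Real.exp_log hκ'0]
    have hFt : Ft v x' = 1/R := by
      rw [Ft]
      rw [hκ'e] at hκ'
      rw [← hκ']
      have hE := Real.exp_pos (v * x')
      have hA := Phi_pos (x' - v/2)
      rw [Real.exp_neg]
      calc Real.exp (v*x') * ((Real.exp (v*x'))⁻¹ / R * stdNormalCDF (x' - v/2))
            / stdNormalCDF (x' - v/2)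
          = (Real.exp (v*x') * (Real.exp (v*x'))⁻¹) *
              (stdNormalCDF (x' - v/2) / stdNormalCDF (x' - v/2)) * (1/R) := by ring
        _ = 1/R := by
            rw [mul_inv_cancel₀ hE.ne', div_self hA.ne', one_mul, one_mul]
    have hx0' : x' = x₀ := (Ft_strictMono hv).injective (by rw [hFt, hx₀])
    rw [hκ'e, hx0']
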